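/- Let X be an ℕ₀-valued random variable with P(X=0) < 1 and U independent with P(U=1)=p, P(U=−1)=q, p+q=1, pq>0. Suppose Y = (X+U)⁺ and V = −U − 2(X+U)⁻ are independent, with p' = P(V=1), q' = P(V=−1). Then with ρ² = pp'/(qq') one has ρ ∈ (0,1), the conditional distributions of X given {X even} and given {X odd} satisfy P(X = 2k | X even) = (1−ρ²)ρ^{2k} = P(X = 2k+1 | X odd) for all k ∈ ℕ₀, and P(X odd) = p', P(Y even) = q. -/

import Mathlib

open MeasureTheory ProbabilityTheory

set_option maxHeartbeats 1000000 in
/-- the `r = 0` case of the reflected random walk characterization. -/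
theorem reflecting_walk_characterization_r_zero
    {Ω : Type*} [MeasurableSpace Ω] (P : Measure Ω) [IsProbabilityMeasure P]
    (p q : ℝ) (hpq : 0 < p * q) (hsum : p + q = 1)
    (X U : Ω → ℤ) (hXm : Measurable X) (hUm : Measurable U)
    (hindep : IndepFun X U P)
    (hXnn : ∀ ω, 0 ≤ X ω)
    (hX0 : (P {ω | X ω = 0}).toReal < 1)
    (hUrange : ∀ ω, U ω ∈ ({-1, 1} : Set ℤ))
    (hU1 : (P {ω | U ω = 1}).toReal = p)
    (hUm1 : (P {ω | U ω = -1}).toReal = q)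
    (hYV : IndepFun (fun ω => max (X ω + U ω) 0)
        (fun ω => -U ω - 2 * max (-(X ω + U ω)) 0) P)
    (p' q' : ℝ)
    (hp' : (P {ω | -U ω - 2 * max (-(X ω + U ω)) 0 = 1}).toReal = p')
    (hq' : (P {ω | -U ω - 2 * max (-(X ω + U ω)) 0 = -1}).toReal = q') :
    0 < p * p' / (q * q') ∧ p * p' / (q * q') < 1 ∧
    (∀ k : ℕ,
      (P {ω | X ω = 2 * (k : ℤ)}).toReal =
        (1 - p * p' / (q * q')) * Real.sqrt (p * p' / (q * q')) ^ (2 * k) *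
          (P {ω | Even (X ω)}).toReal ∧
      (P {ω | X ω = 2 * (k : ℤ) + 1}).toReal =
        (1 - p * p' / (q * q')) * Real.sqrt (p * p' / (q * q')) ^ (2 * k) *
          (P {ω | Odd (X ω)}).toReal) ∧
    (P {ω | Odd (X ω)}).toReal = p' ∧
    (P {ω | Even (max (X ω + U ω) 0)}).toReal = q := by
  have mS : ∀ s : Set ℤ, MeasurableSet s := fun _ => .of_discrete
  set Y : Ω → ℤ := fun ω => max (X ω + U ω) 0 with hYdef
  set V : Ω → ℤ := fun ω => -U ω - 2 * max (-(X ω + U ω)) 0 with hVdef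
  -- positivity of p, q
  have hp : 0 < p := by nlinarith
  have hq : 0 < q := by nlinarith
  -- real-valued product rules
  have hprod : ∀ s t : Set ℤ, (P (X ⁻¹' s ∩ U ⁻¹' t)).toReal
      = (P (X ⁻¹' s)).toReal * (P (U ⁻¹' t)).toReal := by
    intro s t
    rw [hindep.measure_inter_preimage_eq_mul s t (mS s) (mS t), ENNReal.toReal_mul]
  have hprodYV : ∀ s t : Set ℤ, (P (Y ⁻¹' s ∩ V ⁻¹' t)).toReal
      = (P (Y ⁻¹' s)).toReal * (P (V ⁻¹' t)).toReal := by
    intro s t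
    rw [hYV.measure_inter_preimage_eq_mul s t (mS s) (mS t), ENNReal.toReal_mul]
  -- additivity
  have hadd : ∀ A B : Set Ω, Disjoint A B → MeasurableSet B →
      (P (A ∪ B)).toReal = (P A).toReal + (P B).toReal := by
    intro A B hAB hB
    rw [measure_union hAB hB, ENNReal.toReal_add (measure_ne_top _ _) (measure_ne_top _ _)]
  have hcompl : ∀ A : Set Ω, MeasurableSet A → (P Aᶜ).toReal = 1 - (P A).toReal := by
    intro A hA
    rw [measure_compl hA (measure_ne_top _ _), measure_univ,
      ENNReal.toReal_sub_of_le prob_le_one ENNReal.one_ne_top]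
    simp
  -- the sequence a
  set a : ℕ → ℝ := fun n => (P (X ⁻¹' {(n : ℤ)})).toReal with ha_def
  have ha_nn : ∀ n, 0 ≤ a n := fun n => ENNReal.toReal_nonneg
  -- key summation lemma
  have key : ∀ (f : ℕ → ℤ), Function.Injective f → ∀ (S : Set Ω),
      S = ⋃ k, X ⁻¹' {f k} →
      HasSum (fun k => (P (X ⁻¹' {f k})).toReal) ((P S).toReal) := by
    intro f hf S hS
    subst hS
    have hd : Pairwise (Function.onFun Disjoint fun k => X ⁻¹' {f k}) := by
      intro i j hij
      simp only [Function.onFun, Set.disjoint_left, Set.mem_preimage,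
        Set.mem_singleton_iff]
      intro ω hi hj
      exact hij (hf (hi ▸ hj ▸ rfl))
    have h1 : P (⋃ k, X ⁻¹' {f k}) = ∑' k, P (X ⁻¹' {f k}) :=
      measure_iUnion hd fun k => hXm (mS _)
    have h2 : Summable (fun k => (P (X ⁻¹' {f k})).toReal) :=
      ENNReal.summable_toReal (by rw [← h1]; exact measure_ne_top _ _)
    have h3 := ENNReal.tsum_toReal_eq (fun k : ℕ => measure_ne_top P (X ⁻¹' {f k}))
    have h4 := h2.hasSum
    rwa [← h3, ← h1] at h4
  -- total mass
  have htotal : HasSum a 1 := by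
    have h := key (fun n : ℕ => (n : ℤ)) (fun i j h => Int.natCast_inj.mp h) Set.univ
      (by
        ext ω
        simp only [Set.mem_univ, Set.mem_iUnion, Set.mem_preimage, Set.mem_singleton_iff,
          true_iff]
        exact ⟨(X ω).toNat, by have := hXnn ω; omega⟩)
    simpa using h
  -- basic event identities for V
  have hV1set : V ⁻¹' {1} = X ⁻¹' {0}ᶜ ∩ U ⁻¹' {-1} := by
    ext ω
    have h1 := hXnn ω
    have h2 := hUrange ω
    simp only [Set.mem_insert_iff, Set.mem_singleton_iff] at h2
    simp only [Set.mem_preimage, Set.mem_singleton_iff, Set.mem_inter_iff, Set.mem_compl_iff,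
      hVdef]
    omega
  have hVm1set : V ⁻¹' {-1} = (V ⁻¹' {1})ᶜ := by
    ext ω
    have h1 := hXnn ω
    have h2 := hUrange ω
    simp only [Set.mem_insert_iff, Set.mem_singleton_iff] at h2
    simp only [Set.mem_preimage, Set.mem_singleton_iff, Set.mem_compl_iff, hVdef]
    omega
  have ha0lt : a 0 < 1 := by
    have : X ⁻¹' {((0 : ℕ) : ℤ)} = {ω | X ω = 0} := by ext ω; simp
    show (P (X ⁻¹' {((0 : ℕ) : ℤ)})).toReal < 1
    rw [this]; exact hX0
  have hU1' : (P (U ⁻¹' {1})).toReal = p := hU1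
  have hUm1' : (P (U ⁻¹' {-1})).toReal = q := hUm1
  have hp'V : (P (V ⁻¹' {1})).toReal = p' := hp'
  have hq'V : (P (V ⁻¹' {-1})).toReal = q' := hq'
  -- p' = q * (1 - a 0)
  have hV1m : MeasurableSet (V ⁻¹' {1}) := by
    rw [hV1set]; exact (((mS _).preimage hXm).inter ((mS _).preimage hUm))
  have ha0cast : (P (X ⁻¹' {(0:ℤ)})).toReal = a 0 := by norm_num [ha_def]
  have hcomp0 : (P (X ⁻¹' {0}ᶜ)).toReal = 1 - a 0 := by
    have hpc : (X ⁻¹' ({0}ᶜ) : Set Ω) = (X ⁻¹' {0})ᶜ := rfl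
    rw [hpc, hcompl _ ((mS _).preimage hXm), ha0cast]
  have hp'eq : p' = q * (1 - a 0) := by
    rw [← hp'V, hV1set, hprod, hcomp0, hUm1']
    ring
  have hq'eq : q' = 1 - p' := by
    rw [← hq'V, hVm1set, hcompl _ hV1m, hp'V]
  -- positivity of p', q'
  have hp'pos : 0 < p' := by rw [hp'eq]; nlinarith [ha_nn 0]
  have hq'pos : 0 < q' := by
    rw [hq'eq, hp'eq]; nlinarith [ha_nn 0]
  -- base relation : q' * a 1 = p' * a 0
  have hY0set : Y ⁻¹' {0} = X ⁻¹' {0, 1} ∩ U ⁻¹' {-1} := by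
    ext ω
    have h1 := hXnn ω
    have h2 := hUrange ω
    simp only [Set.mem_insert_iff, Set.mem_singleton_iff] at h2
    simp only [Set.mem_preimage, Set.mem_singleton_iff, Set.mem_inter_iff, Set.mem_insert_iff,
      hYdef]
    omega
  have hY0V1set : Y ⁻¹' {0} ∩ V ⁻¹' {1} = X ⁻¹' {1} ∩ U ⁻¹' {-1} := by
    ext ω
    have h1 := hXnn ω
    have h2 := hUrange ω
    simp only [Set.mem_insert_iff, Set.mem_singleton_iff] at h2
    simp only [Set.mem_preimage, Set.mem_singleton_iff, Set.mem_inter_iff, hYdef, hVdef]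
    omega
  have hX01 : (P (X ⁻¹' {0, 1})).toReal = a 0 + a 1 := by
    have hset : (X ⁻¹' {0, 1} : Set Ω) = X ⁻¹' {((0:ℕ):ℤ)} ∪ X ⁻¹' {((1:ℕ):ℤ)} := by
      ext ω; simp
    rw [hset, hadd _ _ (by
      simp only [Set.disjoint_left, Set.mem_preimage, Set.mem_singleton_iff]
      intro ω h1 h2; omega) (hXm (mS _))]
  have ha1cast : ∀ n : ℕ, (P (X ⁻¹' {(n:ℤ)})).toReal = a n := fun _ => rfl
  have hbase : q' * a 1 = p' * a 0 := by
    have e1 : (P (Y ⁻¹' {0} ∩ V ⁻¹' {1})).toReal = a 1 * q := by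
      rw [hY0V1set]
      have : (X ⁻¹' {(1:ℤ)} : Set Ω) = X ⁻¹' {((1:ℕ):ℤ)} := by norm_num
      rw [this, hprod, hUm1']
    have e2 : (P (Y ⁻¹' {0})).toReal = (a 0 + a 1) * q := by
      rw [hY0set, hprod, hX01, hUm1']
    have e3 := hprodYV {0} {1}
    rw [e1, e2, hp'V] at e3
    have e4 : a 1 = (a 0 + a 1) * p' := by
      have h5 : a 1 * q = ((a 0 + a 1) * p') * q := by linear_combination e3
      exact mul_right_cancel₀ (ne_of_gt hq) h5
    linear_combination e4 + a 1 * hq'eq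
  -- recursion
  have hrecEq : ∀ m : ℕ, q' * q * a (m + 2) = p' * p * a m := by
    intro m
    have hYset : Y ⁻¹' {((m:ℤ) + 1)} =
        (X ⁻¹' {((m:ℕ):ℤ)} ∩ U ⁻¹' {1}) ∪ (X ⁻¹' {((m+2:ℕ):ℤ)} ∩ U ⁻¹' {-1}) := by
      ext ω
      have h1 := hXnn ω
      have h2 := hUrange ω
      simp only [Set.mem_insert_iff, Set.mem_singleton_iff] at h2
      simp only [Set.mem_preimage, Set.mem_singleton_iff, Set.mem_inter_iff, Set.mem_union,
        hYdef]
      omega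
    have hYVset : Y ⁻¹' {((m:ℤ) + 1)} ∩ V ⁻¹' {1} = X ⁻¹' {((m+2:ℕ):ℤ)} ∩ U ⁻¹' {-1} := by
      ext ω
      have h1 := hXnn ω
      have h2 := hUrange ω
      simp only [Set.mem_insert_iff, Set.mem_singleton_iff] at h2
      simp only [Set.mem_preimage, Set.mem_singleton_iff, Set.mem_inter_iff, hYdef, hVdef]
      omega
    have e1 : (P (Y ⁻¹' {((m:ℤ) + 1)} ∩ V ⁻¹' {1})).toReal = a (m + 2) * q := by
      rw [hYVset, hprod, hUm1', ha1cast]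
    have e2 : (P (Y ⁻¹' {((m:ℤ) + 1)})).toReal = a m * p + a (m + 2) * q := by
      rw [hYset, hadd _ _ (by
        simp only [Set.disjoint_left, Set.mem_inter_iff, Set.mem_preimage,
          Set.mem_singleton_iff]
        rintro ω ⟨-, h1⟩ ⟨-, h2⟩; omega) (((mS _).preimage hXm).inter ((mS _).preimage hUm)),
        hprod, hprod, hU1', hUm1', ha1cast, ha1cast]
    have e3 := hprodYV {((m:ℤ) + 1)} {1}
    rw [e1, e2, hp'V] at e3
    linear_combination q * a (m + 2) * hq'eq + e3
  -- the ratio c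
  set c := p * p' / (q * q') with hc
  have hqq' : 0 < q * q' := mul_pos hq hq'pos
  have hcpos : 0 < c := div_pos (mul_pos hp hp'pos) hqq'
  have hrec : ∀ m : ℕ, a (m + 2) = c * a m := by
    intro m
    have := hrecEq m
    rw [hc]
    field_simp
    linarith [this]
  have haeven : ∀ k : ℕ, a (2 * k) = c ^ k * a 0 := by
    intro k
    induction k with
    | zero => simp
    | succ n ih =>
      have : 2 * (n + 1) = 2 * n + 2 := by ring
      rw [this, hrec, ih, pow_succ]
      ring
  have haodd : ∀ k : ℕ, a (2 * k + 1) = c ^ k * a 1 := by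
    intro k
    induction k with
    | zero => simp
    | succ n ih =>
      have : 2 * (n + 1) + 1 = (2 * n + 1) + 2 := by ring
      rw [this, hrec, ih, pow_succ]
      ring
  -- a 0 > 0
  have ha0pos : 0 < a 0 := by
    rcases lt_or_eq_of_le (ha_nn 0) with h | h
    · exact h
    · exfalso
      have ha1 : a 1 = 0 := by
        have : q' * a 1 = 0 := by rw [hbase, ← h]; ring
        have := mul_eq_zero.mp this
        rcases this with h' | h'
        · exact absurd h' (ne_of_gt hq'pos)
        · exact h'
      have hzero : ∀ n, a n = 0 := by
        intro n
        rcases Nat.even_or_odd n with ⟨k, hk⟩ | ⟨k, hk⟩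
        · rw [show n = 2 * k by omega, haeven, ← h]; ring
        · rw [show n = 2 * k + 1 by omega, haodd, ha1]; ring
      have : (1 : ℝ) = 0 := htotal.unique (by
        have : a = fun _ => (0:ℝ) := funext hzero
        rw [this]; exact hasSum_zero)
      norm_num at this
  -- c < 1
  have hclt : c < 1 := by
    by_contra h
    push_neg at h
    have hsub : Filter.Tendsto (fun k => a (2 * k)) Filter.atTop (nhds 0) := by
      have h1 := htotal.summable.tendsto_atTop_zero
      exact h1.comp (Filter.tendsto_atTop_atTop.mpr fun b => ⟨b, fun n hn => by omega⟩)
    have : a 0 ≤ 0 := by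
      apply ge_of_tendsto hsub
      filter_upwards with k
      rw [haeven]
      nlinarith [one_le_pow₀ h (n := k), ha_nn 0]
    linarith
  -- sums over evens and odds
  have hPe : HasSum (fun k => a (2 * k)) ((P {ω | Even (X ω)}).toReal) := by
    exact key (fun k : ℕ => ((2 * k : ℕ) : ℤ)) (fun i j h => by
        simp only [Nat.cast_inj] at *; omega)
      {ω | Even (X ω)} (by
        ext ω
        have h1 := hXnn ω
        simp only [Set.mem_setOf_eq, Set.mem_iUnion, Set.mem_preimage, Set.mem_singleton_iff,
          Int.even_iff]
        constructor
        · intro h; exact ⟨(X ω).toNat / 2, by omega⟩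
        · rintro ⟨k, hk⟩; omega)
  have hPo : HasSum (fun k => a (2 * k + 1)) ((P {ω | Odd (X ω)}).toReal) := by
    exact key (fun k : ℕ => ((2 * k + 1 : ℕ) : ℤ)) (fun i j h => by
        simp only [Nat.cast_inj] at *; omega)
      {ω | Odd (X ω)} (by
        ext ω
        have h1 := hXnn ω
        simp only [Set.mem_setOf_eq, Set.mem_iUnion, Set.mem_preimage, Set.mem_singleton_iff,
          Int.odd_iff]
        constructor
        · intro h; exact ⟨(X ω).toNat / 2, by omega⟩
        · rintro ⟨k, hk⟩; omega)
  have hgeo0 : HasSum (fun k : ℕ => c ^ k * a 0) ((1 - c)⁻¹ * a 0) :=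
    (hasSum_geometric_of_lt_one hcpos.le hclt).mul_right (a 0)
  have hgeo1 : HasSum (fun k : ℕ => c ^ k * a 1) ((1 - c)⁻¹ * a 1) :=
    (hasSum_geometric_of_lt_one hcpos.le hclt).mul_right (a 1)
  have hPeval : (P {ω | Even (X ω)}).toReal = (1 - c)⁻¹ * a 0 := by
    refine HasSum.unique ?_ hgeo0
    have : (fun k => a (2 * k)) = fun k : ℕ => c ^ k * a 0 := funext haeven
    rwa [this] at hPe
  have hPoval : (P {ω | Odd (X ω)}).toReal = (1 - c)⁻¹ * a 1 := by
    refine HasSum.unique ?_ hgeo1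
    have : (fun k => a (2 * k + 1)) = fun k : ℕ => c ^ k * a 1 := funext haodd
    rwa [this] at hPo
  have h1c : 1 - c > 0 := by linarith
  -- identity q*q' - p*p' = q * a 0
  have hq'eq2 : q' = p + q * a 0 := by rw [hq'eq, hp'eq]; linarith
  have hkey2 : q * q' - p * p' = q * a 0 := by
    linear_combination q * hq'eq2 - p * hp'eq + q * a 0 * hsum
  -- sqrt power
  have hsqrt : ∀ k : ℕ, Real.sqrt c ^ (2 * k) = c ^ k := by
    intro k
    rw [pow_mul, Real.sq_sqrt hcpos.le]
  -- P(odd) = p'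
  have hOddp' : (P {ω | Odd (X ω)}).toReal = p' := by
    rw [hPoval]
    have ha1 : a 1 = p' * a 0 / q' := by field_simp; linarith [hbase]
    have h1ce : 1 - c = q * a 0 / (q * q') := by
      rw [hc]; field_simp; linarith [hkey2]
    rw [ha1, h1ce]
    field_simp
  refine ⟨hcpos, hclt, fun k => ⟨?_, ?_⟩, hOddp', ?_⟩
  · -- even part
    have hset : {ω | X ω = 2 * (k : ℤ)} = X ⁻¹' {((2 * k : ℕ) : ℤ)} := by
      ext ω
      simp only [Set.mem_setOf_eq, Set.mem_preimage, Set.mem_singleton_iff]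
      constructor <;> intro h <;> omega
    rw [hset, ha1cast, haeven, hsqrt, hPeval]
    field_simp
  · -- odd part
    have hset : {ω | X ω = 2 * (k : ℤ) + 1} = X ⁻¹' {((2 * k + 1 : ℕ) : ℤ)} := by
      ext ω
      simp only [Set.mem_setOf_eq, Set.mem_preimage, Set.mem_singleton_iff]
      constructor <;> intro h <;> omega
    rw [hset, ha1cast, haodd, hsqrt, hPoval]
    field_simp
  · -- P(Y even) = q
    have hset : {ω | Even (Y ω)} =
        (X ⁻¹' {n | Odd n} ∩ U ⁻¹' {1}) ∪ (X ⁻¹' ({0} ∪ {n | Odd n}) ∩ U ⁻¹' {-1}) := by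
      ext ω
      have h1 := hXnn ω
      have h2 := hUrange ω
      simp only [Set.mem_insert_iff, Set.mem_singleton_iff] at h2
      simp only [Set.mem_setOf_eq, Set.mem_preimage, Set.mem_singleton_iff, Set.mem_inter_iff,
        Set.mem_union, hYdef, Int.even_iff, Int.odd_iff]
      omega
    have hOddSet : (X ⁻¹' {n | Odd n} : Set Ω) = {ω | Odd (X ω)} := rfl
    have hsplit : (P (X ⁻¹' ({0} ∪ {n | Odd n}))).toReal = a 0 + p' := by
      rw [Set.preimage_union]
      rw [hadd _ _ (by
        simp only [Set.disjoint_left, Set.mem_preimage, Set.mem_singleton_iff,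
          Set.mem_setOf_eq]
        intro ω hω h'
        rw [Int.odd_iff] at h'
        omega) (hXm (mS _))]
      rw [hOddSet, hOddp', ha0cast]
    show (P {ω | Even (Y ω)}).toReal = q
    rw [hset, hadd _ _ (by
        simp only [Set.disjoint_left, Set.mem_inter_iff, Set.mem_preimage,
          Set.mem_singleton_iff]
        rintro ω ⟨-, h1⟩ ⟨-, h2⟩; omega)
      (((mS _).preimage hXm).inter ((mS _).preimage hUm)),
      hprod, hprod, hU1', hUm1', hOddSet, hOddp', hsplit]
    rw [hp'eq]
    ring_nf
    nlinarith [hsum, ha_nn 0]
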